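/- With the same data (crossed module E → G, G acting on X and Y, G-equivariant f : Y → X, im(∂) acting trivially on X and Y), the second Peiffer relation holds: ∂(ξ⊗e) ▷ (ζ⊗d) = (ξ₍₁₎⊗e)·(ζ⊗d)·S(ξ₍₂₎⊗e), for all ξ⊗e, ζ⊗d ∈ Fun(X)⊗ℂ[E]. -/

import Mathlib

open TensorProduct

noncomputable section

/-- The comultiplication of the group Hopf algebra `ℂ[K]`: `Δ(k) = k ⊗ k`. -/
def gaComul (K : Type*) [Group K] :
    MonoidAlgebra ℂ K →ₗ[ℂ] MonoidAlgebra ℂ K ⊗[ℂ] MonoidAlgebra ℂ K :=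
  (Finsupp.lsum ℂ fun k => LinearMap.toSpanSingleton ℂ _
    (MonoidAlgebra.single k (1 : ℂ) ⊗ₜ[ℂ] MonoidAlgebra.single k (1 : ℂ))) ∘ₗ
    (MonoidAlgebra.coeffLinearEquiv ℂ).toLinearMap

/-- The counit of the group Hopf algebra `ℂ[K]`: `ε(k) = 1`. -/
def gaCounit (K : Type*) [Group K] : MonoidAlgebra ℂ K →ₗ[ℂ] ℂ :=
  (Finsupp.lsum ℂ fun _ => (LinearMap.id : ℂ →ₗ[ℂ] ℂ)) ∘ₗ
    (MonoidAlgebra.coeffLinearEquiv ℂ).toLinearMap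

/-- The comultiplication of `Fun(Y)`: `Δ(φ)(y ⊗ y') = φ(y y')`, concretely
`Δ(φ) = ∑ₐ δₐ ⊗ φ(a ⬝ ·)`. -/
def funComul (Y : Type*) [Group Y] [Fintype Y] [DecidableEq Y] :
    (Y → ℂ) →ₗ[ℂ] (Y → ℂ) ⊗[ℂ] (Y → ℂ) :=
  ∑ a : Y,
    (TensorProduct.mk ℂ (Y → ℂ) (Y → ℂ) (Pi.single a (1 : ℂ))) ∘ₗ
      LinearMap.funLeft ℂ ℂ (fun y => a * y)

variable (Y G X E : Type*) [Group Y] [Group G] [Group X] [Group E]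
  [Fintype Y] [Fintype G] [Fintype X] [Fintype E] [DecidableEq Y]

/-- The action of `ℂ[G]` on `Fun(Y)`: `(g ▷ ψ)(y) = ψ(g⁻¹ ▷ y)`. -/
def actFunY (ρ : G →* MulAut Y) :
    MonoidAlgebra ℂ G →ₗ[ℂ] (Y → ℂ) →ₗ[ℂ] (Y → ℂ) :=
  (Finsupp.lsum ℂ fun g => LinearMap.toSpanSingleton ℂ _
    (LinearMap.funLeft ℂ ℂ (fun y => ρ g⁻¹ y))) ∘ₗ
    (MonoidAlgebra.coeffLinearEquiv ℂ).toLinearMap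

/-- The multiplication `(φ ⊗ g) ⬝ (ψ ⊗ h) = φ (g ▷ ψ) ⊗ g h` of the crossed product
`Fun(Y) ⋊ ℂ[G]`. -/
def cpMul (ρ : G →* MulAut Y) :
    ((Y → ℂ) ⊗[ℂ] MonoidAlgebra ℂ G) ⊗[ℂ] ((Y → ℂ) ⊗[ℂ] MonoidAlgebra ℂ G) →ₗ[ℂ]
      (Y → ℂ) ⊗[ℂ] MonoidAlgebra ℂ G :=
  (TensorProduct.map (LinearMap.mul' ℂ (Y → ℂ)) LinearMap.id) ∘ₗ
  (TensorProduct.assoc ℂ (Y → ℂ) (Y → ℂ) (MonoidAlgebra ℂ G)).symm.toLinearMap ∘ₗ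
  (TensorProduct.map LinearMap.id
    ((TensorProduct.map (TensorProduct.lift (actFunY Y G ρ))
        (LinearMap.mul' ℂ (MonoidAlgebra ℂ G))) ∘ₗ
      (TensorProduct.tensorTensorTensorComm ℂ (MonoidAlgebra ℂ G) (MonoidAlgebra ℂ G)
        (Y → ℂ) (MonoidAlgebra ℂ G)).toLinearMap)) ∘ₗ
  (TensorProduct.assoc ℂ (Y → ℂ) (MonoidAlgebra ℂ G ⊗[ℂ] MonoidAlgebra ℂ G)
    ((Y → ℂ) ⊗[ℂ] MonoidAlgebra ℂ G)).toLinearMap ∘ₗ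
  (TensorProduct.map (TensorProduct.map LinearMap.id (gaComul G)) LinearMap.id)

/-- The unit `1 ⊗ 1` of `Fun(Y) ⋊ ℂ[G]`. -/
def cpOne : (Y → ℂ) ⊗[ℂ] MonoidAlgebra ℂ G :=
  (1 : Y → ℂ) ⊗ₜ[ℂ] (1 : MonoidAlgebra ℂ G)

/-- The comultiplication `Δ(φ ⊗ g) = (φ₍₁₎ ⊗ g) ⊗ (φ₍₂₎ ⊗ g)` of `Fun(Y) ⋊ ℂ[G]`. -/
def cpComul :
    (Y → ℂ) ⊗[ℂ] MonoidAlgebra ℂ G →ₗ[ℂ]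
      ((Y → ℂ) ⊗[ℂ] MonoidAlgebra ℂ G) ⊗[ℂ] ((Y → ℂ) ⊗[ℂ] MonoidAlgebra ℂ G) :=
  (TensorProduct.tensorTensorTensorComm ℂ (Y → ℂ) (Y → ℂ)
      (MonoidAlgebra ℂ G) (MonoidAlgebra ℂ G)).toLinearMap ∘ₗ
    TensorProduct.map (funComul Y) (gaComul G)

/-- The counit `ε(φ ⊗ g) = φ(1)` of `Fun(Y) ⋊ ℂ[G]`. -/
def cpCounit : (Y → ℂ) ⊗[ℂ] MonoidAlgebra ℂ G →ₗ[ℂ] ℂ :=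
  TensorProduct.lift
    ((LinearMap.proj (1 : Y) : (Y → ℂ) →ₗ[ℂ] ℂ).smulRight (gaCounit G))

/-- The action `(φ ⊗ g) ▷ (ξ ⊗ e) = φ(1) (g ▷ ξ) ⊗ (g ▷ e)` of `Fun(Y) ⋊ ℂ[G]` on
`Fun(X) ⊗ ℂ[E]`. -/
def gexyAct (ρX : G →* MulAut X) (ρE : G →* MulAut E) :
    (Y → ℂ) ⊗[ℂ] MonoidAlgebra ℂ G →ₗ[ℂ]
      ((X → ℂ) ⊗[ℂ] MonoidAlgebra ℂ E) →ₗ[ℂ] (X → ℂ) ⊗[ℂ] MonoidAlgebra ℂ E :=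
  TensorProduct.lift
    ((LinearMap.proj (1 : Y) : (Y → ℂ) →ₗ[ℂ] ℂ).smulRight
      ((Finsupp.lsum ℂ fun g => LinearMap.toSpanSingleton ℂ _
        (TensorProduct.map (LinearMap.funLeft ℂ ℂ (fun x => ρX g⁻¹ x))
          (MonoidAlgebra.mapDomainLinearMap ℂ ℂ (fun e : E => ρE g e)))) ∘ₗ
        (MonoidAlgebra.coeffLinearEquiv ℂ).toLinearMap))

variable [DecidableEq X]

/-- The boundary `∂(ξ ⊗ e) = f*ξ ⊗ ∂(e)` from `Fun(X) ⊗ ℂ[E]` to `Fun(Y) ⋊ ℂ[G]`. -/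
def gexyBdry (f : Y →* X) (d : E →* G) :
    (X → ℂ) ⊗[ℂ] MonoidAlgebra ℂ E →ₗ[ℂ] (Y → ℂ) ⊗[ℂ] MonoidAlgebra ℂ G :=
  TensorProduct.map (LinearMap.funLeft ℂ ℂ f) (MonoidAlgebra.mapDomainLinearMap ℂ ℂ d)

/-- The comultiplication of the tensor product Hopf algebra `Fun(X) ⊗ ℂ[E]`. -/
def taComul :
    (X → ℂ) ⊗[ℂ] MonoidAlgebra ℂ E →ₗ[ℂ]
      ((X → ℂ) ⊗[ℂ] MonoidAlgebra ℂ E) ⊗[ℂ] ((X → ℂ) ⊗[ℂ] MonoidAlgebra ℂ E) :=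
  (TensorProduct.tensorTensorTensorComm ℂ (X → ℂ) (X → ℂ)
      (MonoidAlgebra ℂ E) (MonoidAlgebra ℂ E)).toLinearMap ∘ₗ
    TensorProduct.map (funComul X) (gaComul E)

/-- The antipode `S(ξ ⊗ e) = S(ξ) ⊗ e⁻¹` of the tensor product Hopf algebra
`Fun(X) ⊗ ℂ[E]`, where `S(ξ)(x) = ξ(x⁻¹)`. -/
def taAntipode :
    (X → ℂ) ⊗[ℂ] MonoidAlgebra ℂ E →ₗ[ℂ] (X → ℂ) ⊗[ℂ] MonoidAlgebra ℂ E :=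
  TensorProduct.map (LinearMap.funLeft ℂ ℂ (fun x : X => x⁻¹))
    (MonoidAlgebra.mapDomainLinearMap ℂ ℂ (fun e : E => e⁻¹))

/-- The "quantum adjoint action" `a ⊗ b ↦ a₍₁₎ b S(a₍₂₎)` of `Fun(X) ⊗ ℂ[E]` on
itself. -/
def taAdjoint :
    ((X → ℂ) ⊗[ℂ] MonoidAlgebra ℂ E) ⊗[ℂ] ((X → ℂ) ⊗[ℂ] MonoidAlgebra ℂ E) →ₗ[ℂ]
      (X → ℂ) ⊗[ℂ] MonoidAlgebra ℂ E :=
  (LinearMap.mul' ℂ ((X → ℂ) ⊗[ℂ] MonoidAlgebra ℂ E)) ∘ₗ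
  (TensorProduct.map LinearMap.id
    (LinearMap.mul' ℂ ((X → ℂ) ⊗[ℂ] MonoidAlgebra ℂ E))) ∘ₗ
  (TensorProduct.map LinearMap.id
    (TensorProduct.comm ℂ ((X → ℂ) ⊗[ℂ] MonoidAlgebra ℂ E)
      ((X → ℂ) ⊗[ℂ] MonoidAlgebra ℂ E)).toLinearMap) ∘ₗ
  (TensorProduct.assoc ℂ ((X → ℂ) ⊗[ℂ] MonoidAlgebra ℂ E)
    ((X → ℂ) ⊗[ℂ] MonoidAlgebra ℂ E) ((X → ℂ) ⊗[ℂ] MonoidAlgebra ℂ E)).toLinearMap ∘ₗ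
  (TensorProduct.map (TensorProduct.map LinearMap.id (taAntipode X E))
    LinearMap.id) ∘ₗ
  (TensorProduct.map (taComul X E) LinearMap.id)

/-- With the GEXY data (crossed module `E → G`, `G` acting on `X` and
`Y`, `G`-equivariant `f : Y →* X`, `im(∂)` acting trivially on `X` and `Y`), the second
Peiffer relation holds:
`∂(ξ ⊗ e) ▷ (ζ ⊗ d) = (ξ₍₁₎ ⊗ e) ⬝ (ζ ⊗ d) ⬝ S(ξ₍₂₎ ⊗ e)`. -/
theorem stmt12 (d : E →* G) (ρGE : G →* MulAut E)
    (ρY : G →* MulAut Y) (ρX : G →* MulAut X) (f : Y →* X)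
    (grp_peiffer1 : ∀ (g : G) (e : E), d (ρGE g e) = g * d e * g⁻¹)
    (grp_peiffer2 : ∀ e e' : E, ρGE (d e) e' = e * e' * e⁻¹)
    (hequiv : ∀ (g : G) (y : Y), f (ρY g y) = ρX g (f y))
    (htrivX : ∀ (e : E) (x : X), ρX (d e) x = x)
    (htrivY : ∀ (e : E) (y : Y), ρY (d e) y = y) :
    TensorProduct.lift (gexyAct Y G X E ρX ρGE) ∘ₗ
        TensorProduct.map (gexyBdry Y G X E f d) LinearMap.id =
      taAdjoint X E := by
  ext a e b d'
  simp only [TensorProduct.AlgebraTensorModule.curry_apply, TensorProduct.curry_apply,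
    LinearMap.coe_comp, Function.comp_apply, LinearMap.coe_restrictScalars,
    LinearMap.coe_single, MonoidAlgebra.lsingle_apply]
  simp only [gexyBdry, gexyAct, taAdjoint, taComul, taAntipode, funComul, gaComul,
    LinearMap.comp_apply, TensorProduct.map_tmul, TensorProduct.lift.tmul,
    LinearMap.id_apply, Finsupp.lmapDomain_apply, Finsupp.mapDomain_single,
    Finsupp.lsum_single, LinearMap.toSpanSingleton_apply, LinearMap.smulRight_apply,
    LinearMap.proj_apply, LinearEquiv.coe_coe, LinearMap.sum_apply, LinearMap.coe_sum,
    Finset.sum_apply, TensorProduct.sum_tmul, TensorProduct.tmul_sum, map_sum,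
    TensorProduct.assoc_tmul, TensorProduct.comm_tmul, TensorProduct.mk_apply,
    TensorProduct.tensorTensorTensorComm_tmul, LinearMap.mul'_apply,
    TensorProduct.smul_tmul', TensorProduct.tmul_smul, LinearMap.funLeft_apply,
    Algebra.TensorProduct.tmul_mul_tmul, MonoidAlgebra.single_mul_single,
    one_smul, mul_one, one_mul, map_one, MonoidAlgebra.single]
  have hcG : ∀ (m : G) (r : ℂ), MonoidAlgebra.coeffLinearEquiv ℂ (MonoidAlgebra.single m r) =
      Finsupp.single m r := fun _ _ => rfl
  have hcE : ∀ (m : E) (r : ℂ), MonoidAlgebra.coeffLinearEquiv ℂ (MonoidAlgebra.single m r) =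
      Finsupp.single m r := fun _ _ => rfl
  simp only [MonoidAlgebra.ofCoeff_single, MonoidAlgebra.mapDomainLinearMap_single,
    LinearMap.comp_apply, LinearEquiv.coe_coe, LinearMap.smul_apply, hcG, hcE,
    Finsupp.lsum_single, LinearMap.toSpanSingleton_apply, one_smul]
  simp only [one_smul, TensorProduct.map_tmul, TensorProduct.tensorTensorTensorComm_tmul,
    TensorProduct.assoc_tmul, TensorProduct.comm_tmul, LinearMap.mul'_apply,
    Algebra.TensorProduct.tmul_mul_tmul, LinearMap.id_apply, LinearMap.funLeft_apply,
    LinearEquiv.coe_coe]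
  rw [MonoidAlgebra.mapDomainLinearMap_single]
  rw [grp_peiffer2 e d']
  have h1 : (LinearMap.funLeft ℂ ℂ fun x => (ρX (d e)⁻¹) x) (Pi.single b 1) =
      Pi.single b 1 := by
    funext z
    have h2 : (ρX (d e)⁻¹) z = z := by
      rw [← map_inv d e]
      exact htrivX e⁻¹ z
    simp only [LinearMap.funLeft_apply]
    exact congrArg _ h2
  rw [h1, ← TensorProduct.sum_tmul, TensorProduct.smul_tmul']
  congr 1
  · -- function factor
    funext z
    simp only [Finset.sum_apply, Pi.mul_apply, Pi.smul_apply, smul_eq_mul,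
      LinearMap.funLeft_apply]
    simp only [Pi.single_apply, mul_ite, ite_mul, zero_mul, mul_zero, one_mul, mul_one]
    rw [Finset.sum_eq_single z]
    · by_cases ha : (1:X) = a <;> simp [ha, mul_inv_cancel]
    · intro x _ hx
      simp [Ne.symm hx]
    · simp
  · -- monoid algebra factor
    rw [MonoidAlgebra.mapDomainLinearMap_single,
      MonoidAlgebra.single_mul_single, MonoidAlgebra.single_mul_single]
    rw [mul_assoc]
    simp [-MonoidAlgebra.ofCoeff_single, MonoidAlgebra.single]

end
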